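/- cov(ℳ) ≤ 𝔞(𝒩𝒟_T): if ℱ ⊆ 𝒩𝒟_T is a pairwise almost disjoint family of cardinality less than cov(ℳ), then there exists f ∈ 2^ω such that the branch B(f) is in 𝒩𝒟_T and is almost disjoint from every member of ℱ; hence ℱ is not mad in 𝒩𝒟_T. -/

import Mathlib

open Cardinal Set

/-- The full binary tree `T = 2^{<ω}`, modeled as finite lists of booleans;
`s ≤ t` iff `t` is a prefix of `s` (i.e. `s` extends `t`). -/
abbrev BinTree := List Bool

/-- The restriction `f↾n ∈ 2^{<ω}` of `f ∈ 2^ω`. -/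
def restr (f : ℕ → Bool) (n : ℕ) : BinTree := List.ofFn (fun i : Fin n => f i)

/-- The branch `B(f) = { f↾n : n ∈ ω }` induced by `f ∈ 2^ω`. -/
def branch (f : ℕ → Bool) : Set BinTree := Set.range (restr f)

/-- `⌊X⌋ = { f ∈ 2^ω : |B(f) ∩ X| = ℵ₀ }`. -/
def floorSet (X : Set BinTree) : Set (ℕ → Bool) := {f | (branch f ∩ X).Infinite}

/-- `X` is covered by finitely many branches of `T`. -/
def CoveredByFinitelyManyBranches (X : Set BinTree) : Prop :=
  ∃ s : Finset (ℕ → Bool), X ⊆ ⋃ f ∈ s, branch f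

/-- `X` contains no infinite antichain (w.r.t. the prefix/extension order on `T`). -/
def NoInfiniteAntichain (X : Set BinTree) : Prop :=
  ¬ ∃ A ⊆ X, A.Infinite ∧ IsAntichain (· <+: ·) A

/-- The class `ℬ_T` of infinite subsets of `T` containing no infinite antichain. -/
def Bclass : Set (Set BinTree) := { X | X.Infinite ∧ NoInfiniteAntichain X }

/-- The class `𝒜_T` of infinite antichains of `T`. -/
def Aclass : Set (Set BinTree) := { X | X.Infinite ∧ IsAntichain (· <+: ·) X }

/-- The class `𝒩𝒟_T` of infinite `X ⊆ T` with `⌊X⌋` nowhere dense in Cantor space. -/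
def NDclass : Set (Set BinTree) := { X | X.Infinite ∧ IsNowhereDense (floorSet X) }

/-- `σ` is the standard fair-coin product measure on `2^ω`, characterized as a
probability measure giving each basic clopen set `{ f : f↾ℓ(t) = t }` measure `2^{-ℓ(t)}`. -/
def IsCantorMeasure (σ : MeasureTheory.Measure (ℕ → Bool)) : Prop :=
  MeasureTheory.IsProbabilityMeasure σ ∧
    ∀ t : BinTree, σ { f | restr f t.length = t } = (2 : ENNReal)⁻¹ ^ t.length

/-- The class `𝒩_T` (w.r.t. a measure `σ` on `2^ω`) of infinite `X ⊆ T` with `σ(⌊X⌋) = 0`. -/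
def Nclass (σ : MeasureTheory.Measure (ℕ → Bool)) : Set (Set BinTree) :=
  { X | X.Infinite ∧ σ (floorSet X) = 0 }

/-- Pairwise almost disjoint family of infinite sets. -/
def ADFamily {α : Type*} (F : Set (Set α)) : Prop :=
  (∀ X ∈ F, X.Infinite) ∧ F.Pairwise fun X Y => (X ∩ Y).Finite

/-- `F` is a maximal almost disjoint family within `𝒳`. -/
def MadIn {α : Type*} (𝒳 F : Set (Set α)) : Prop :=
  F ⊆ 𝒳 ∧ ADFamily F ∧ ∀ Y ∈ 𝒳, ∃ X ∈ F, (Y ∩ X).Infinite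

/-- The collection `[α]^{ℵ₀}` of all infinite subsets of `α`. -/
def infSets (α : Type*) : Set (Set α) := { X | X.Infinite }

/-- `𝔞(𝒳)`: the least cardinality of an infinite mad family within `𝒳`. -/
noncomputable def aInv {α : Type*} (𝒳 : Set (Set α)) : Cardinal :=
  sInf { c : Cardinal | ∃ F, F.Infinite ∧ MadIn 𝒳 F ∧ #F = c }

/-- `cov(ℳ)`: the least number of meager subsets of `2^ω` covering `2^ω`. -/
noncomputable def covMeager : Cardinal :=
  sInf { c : Cardinal | ∃ S : Set (Set (ℕ → Bool)),
    (∀ A ∈ S, IsMeagre A) ∧ ⋃₀ S = Set.univ ∧ #S = c }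

/-- `cov(𝒩)`: the least number of `σ`-null subsets of `2^ω` covering `2^ω`. -/
noncomputable def covNull (σ : MeasureTheory.Measure (ℕ → Bool)) : Cardinal :=
  sInf { c : Cardinal | ∃ S : Set (Set (ℕ → Bool)),
    (∀ A ∈ S, σ A = 0) ∧ ⋃₀ S = Set.univ ∧ #S = c }

/-- `F^⊥`: the family of infinite sets almost disjoint from every member of `F`. -/
def perp {α : Type*} (F : Set (Set α)) : Set (Set α) :=
  { Y | Y.Infinite ∧ ∀ X ∈ F, (Y ∩ X).Finite }

/-- Membership in the ideal `ℐ(G)` generated by `G` together with the finite sets: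
`S ⊆* ∪G'` for some finite `G' ⊆ G`. -/
def InIdeal {α : Type*} (G : Set (Set α)) (S : Set α) : Prop :=
  ∃ G' : Finset (Set α), ↑G' ⊆ G ∧ (S \ ⋃₀ ↑G').Finite

/-- `𝔞⁺(F) = 𝔞(F^⊥)`. -/
noncomputable def aPlus {α : Type*} (F : Set (Set α)) : Cardinal := aInv (perp F)

/-- `B` almost decides `F`: `B^⊥` is exactly the family of infinite members of
the ideal generated by `F \ B` and the finite sets. -/
def AlmostDecides {α : Type*} (B F : Set (Set α)) : Prop :=
  perp B = { Y | Y.Infinite ∧ InIdeal (F \ B) Y }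

/-- A subset `C` of a poset is centered: every finite subset of `C` has a common
lower bound. -/
def Centered {P : Type*} [Preorder P] (C : Set P) : Prop :=
  ∀ s : Finset P, ↑s ⊆ C → ∃ p, ∀ q ∈ s, p ≤ q

/-- A poset is σ-centered: it is a countable union of centered subsets. -/
def SigmaCentered (P : Type*) [Preorder P] : Prop :=
  ∃ C : ℕ → Set P, (∀ n, Centered (C n)) ∧ ⋃ n, C n = Set.univ

/-- `D` is dense (below every condition) in the poset `P`. -/
def DenseBelow {P : Type*} [Preorder P] (D : Set P) : Prop :=
  ∀ p : P, ∃ q ∈ D, q ≤ p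

/-- `G` is a filter on the poset `P`. -/
def IsFilterOn {P : Type*} [Preorder P] (G : Set P) : Prop :=
  (∀ p ∈ G, ∀ q, p ≤ q → q ∈ G) ∧ ∀ p ∈ G, ∀ q ∈ G, ∃ r ∈ G, r ≤ p ∧ r ≤ q

/-- Martin's axiom for σ-centered posets: for every nonempty σ-centered poset and
fewer than continuum many dense sets there is a filter meeting them all. -/
def MASigmaCentered : Prop :=
  ∀ (P : Type) (_ : Preorder P) (_ : Nonempty P), SigmaCentered P →
    ∀ 𝒟 : Set (Set P), #𝒟 < Cardinal.continuum → (∀ D ∈ 𝒟, DenseBelow D) →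
      ∃ G : Set P, IsFilterOn G ∧ ∀ D ∈ 𝒟, (G ∩ D).Nonempty

/-- `cov(ℳ) ≤ 𝔞(𝒩𝒟_T)`: an ad family in `𝒩𝒟_T` of size `< cov(ℳ)` is not mad in
`𝒩𝒟_T`, as witnessed by a branch. -/

lemma restr_injective (f : ℕ → Bool) : Function.Injective (restr f) := by
  intro a b h
  have := congrArg List.length h
  simpa [restr] using this

lemma branch_infinite (f : ℕ → Bool) : (branch f).Infinite :=
  Set.infinite_range_of_injective (restr_injective f)

lemma singleton_nwd (f : ℕ → Bool) : IsNowhereDense ({f} : Set (ℕ → Bool)) := by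
  rw [IsNowhereDense, closure_singleton]
  by_contra h
  have hf : f ∈ interior ({f} : Set (ℕ → Bool)) := by
    rcases Set.nonempty_iff_ne_empty.2 h with ⟨g, hg⟩
    have : g ∈ ({f} : Set (ℕ → Bool)) := interior_subset hg
    rwa [Set.mem_singleton_iff.1 this] at hg
  have hopen : IsOpen (interior ({f} : Set (ℕ → Bool))) := isOpen_interior
  rcases isOpen_pi_iff.1 hopen f hf with ⟨I, u, hu, hsub⟩
  obtain ⟨n, hn⟩ := Infinite.exists_notMem_finset I
  set g : ℕ → Bool := fun m => if m ∈ I then f m else !f m with hg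
  have hgmem : g ∈ (I : Set ℕ).pi u := by
    intro a ha
    have ha' : a ∈ I := by simpa using ha
    have : g a = f a := by simp [hg, ha']
    rw [this]; exact (hu a ha').2
  have : g = f := Set.mem_singleton_iff.1 (interior_subset (hsub hgmem))
  have : g n = f n := congrFun this n
  simp [hg, hn] at this

lemma floorSet_branch (f : ℕ → Bool) : floorSet (branch f) = {f} := by
  ext g
  constructor
  · intro hg
    have hS : {a : ℕ | restr g a = restr f a}.Infinite := by
      have hsub : branch g ∩ branch f ⊆ restr g '' {a : ℕ | restr g a = restr f a} := by
        rintro x ⟨⟨a, rfl⟩, ⟨b, hb⟩⟩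
        have hab : b = a := by
          have := congrArg List.length hb
          simpa [restr] using this
        exact ⟨a, by simp [Set.mem_setOf_eq, hab ▸ hb.symm], rfl⟩
      exact Set.Infinite.of_image _ (hg.mono hsub)
    funext n
    obtain ⟨a, ha, hna⟩ := hS.exists_gt n
    have heq : (fun i : Fin a => g ↑i) = fun i : Fin a => f ↑i := List.ofFn_injective ha
    exact congrArg (fun u => u (⟨n, hna⟩ : Fin a)) heq
  · rintro rfl
    simpa [floorSet, Set.inter_self] using branch_infinite g

lemma branch_injective : Function.Injective branch := by
  intro f g h
  funext n
  have hmem : restr f (n+1) ∈ branch g := h ▸ Set.mem_range_self (n+1)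
  obtain ⟨b, hb⟩ := hmem
  have hbn : b = n + 1 := by
    have := congrArg List.length hb
    simpa [restr] using this
  subst hbn
  have heq : (fun i : Fin (n+1) => g ↑i) = fun i : Fin (n+1) => f ↑i := List.ofFn_injective hb
  exact (congrArg (fun u => u (⟨n, Nat.lt_succ_self n⟩ : Fin (n+1))) heq).symm

lemma branch_mem_ND (f : ℕ → Bool) : branch f ∈ NDclass :=
  ⟨branch_infinite f, by rw [floorSet_branch]; exact singleton_nwd f⟩

lemma nwd_isMeagre {s : Set (ℕ → Bool)} (h : IsNowhereDense s) : IsMeagre s :=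
  isMeagre_iff_countable_union_isNowhereDense.2
    ⟨{s}, by simpa using h, Set.countable_singleton s, by simp⟩

lemma main_part2 (F : Set (Set BinTree)) (hF : F ⊆ NDclass) (hlt : #F < covMeager) :
    ∃ f : ℕ → Bool, branch f ∈ NDclass ∧ ∀ X ∈ F, (branch f ∩ X).Finite := by
  set S : Set (Set (ℕ → Bool)) := floorSet '' F with hSdef
  have hmeag : ∀ A ∈ S, IsMeagre A := by
    rintro A ⟨X, hX, rfl⟩
    exact nwd_isMeagre (hF hX).2
  have hne : ⋃₀ S ≠ Set.univ := by
    intro hcov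
    have : covMeager ≤ #S := csInf_le' ⟨S, hmeag, hcov, rfl⟩
    exact absurd (lt_of_le_of_lt (this.trans (Cardinal.mk_image_le)) hlt) (lt_irrefl _)
  obtain ⟨f, hf⟩ : ∃ f, f ∉ ⋃₀ S := by
    by_contra h
    push_neg at h
    exact hne (Set.eq_univ_of_forall h)
  refine ⟨f, branch_mem_ND f, fun X hX => ?_⟩
  by_contra hinf
  exact hf ⟨floorSet X, ⟨X, hX, rfl⟩, hinf⟩

lemma exists_mad : ∃ F, F.Infinite ∧ MadIn NDclass F := by
  set S : Set (Set (Set BinTree)) := {F | F ⊆ NDclass ∧ ADFamily F} with hS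
  have hF0 : Set.range branch ∈ S := by
    constructor
    · rintro _ ⟨f, rfl⟩; exact branch_mem_ND f
    · constructor
      · rintro _ ⟨f, rfl⟩; exact branch_infinite f
      · rintro _ ⟨f, rfl⟩ _ ⟨g, rfl⟩ hne
        have hfg : f ≠ g := fun h => hne (by rw [h])
        obtain ⟨n, hn⟩ : ∃ n, f n ≠ g n := by
          by_contra h; push_neg at h; exact hfg (funext h)
        have : branch f ∩ branch g ⊆ restr f '' (Set.Iic n) := by
          rintro x ⟨⟨a, rfl⟩, ⟨b, hb⟩⟩
          have hab : b = a := by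
            have := congrArg List.length hb
            simpa [restr] using this
          subst hab
          refine ⟨b, ?_, rfl⟩
          by_contra hgt
          simp only [Set.mem_Iic, not_le] at hgt
          exact hn (by
            have := List.ofFn_injective hb.symm
            exact (congrArg (fun u => u ⟨n, hgt⟩) this : f n = g n))
        exact Set.Finite.subset ((Set.finite_Iic n).image _) this
  have hzorn : ∀ c ⊆ S, IsChain (· ⊆ ·) c → c.Nonempty →
      ∃ ub ∈ S, ∀ s ∈ c, s ⊆ ub := by
    intro c hcS hchain hcne
    refine ⟨⋃₀ c, ⟨?_, ?_, ?_⟩, fun s hs => Set.subset_sUnion_of_mem hs⟩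
    · intro X hX
      obtain ⟨F', hF'c, hXF'⟩ := hX
      exact (hcS hF'c).1 hXF'
    · intro X hX
      obtain ⟨F', hF'c, hXF'⟩ := hX
      exact (hcS hF'c).2.1 X hXF'
    · rintro X ⟨F1, hF1, hXF1⟩ Z ⟨F2, hF2, hZF2⟩ hne
      rcases hchain.total hF1 hF2 with hle | hle
      · exact (hcS hF2).2.2 (hle hXF1) hZF2 hne
      · exact (hcS hF1).2.2 hXF1 (hle hZF2) hne
  obtain ⟨M, hM0, hMmax⟩ := zorn_subset_nonempty S hzorn _ hF0
  refine ⟨M, ?_, hMmax.1.1, hMmax.1.2, ?_⟩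
  · exact Set.Infinite.mono hM0 (Set.infinite_range_of_injective branch_injective)
  · intro Y hY
    by_contra h
    push_neg at h
    have hYad : ∀ X ∈ M, (Y ∩ X).Finite := fun X hX => h X hX
    have hYM : insert Y M ∈ S := by
      refine ⟨Set.insert_subset hY hMmax.1.1, ?_, ?_⟩
      · rintro X (rfl | hX)
        · exact hY.1
        · exact hMmax.1.2.1 X hX
      · apply Set.Pairwise.insert hMmax.1.2.2
        intro X hX hne
        exact ⟨hYad X hX, by rw [Set.inter_comm]; exact hYad X hX⟩
    have : insert Y M ⊆ M := hMmax.2 hYM (Set.subset_insert Y M)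
    have hYmem : Y ∈ M := this (Set.mem_insert Y M)
    have := h Y hYmem
    rw [Set.inter_self] at this
    exact hY.1 this

theorem stmt7 :
    covMeager ≤ aInv NDclass ∧
    ∀ F : Set (Set BinTree), F ⊆ NDclass → ADFamily F → #F < covMeager →
      ∃ f : ℕ → Bool, branch f ∈ NDclass ∧ ∀ X ∈ F, (branch f ∩ X).Finite := by
  have part2 : ∀ F : Set (Set BinTree), F ⊆ NDclass → ADFamily F → #F < covMeager →
      ∃ f : ℕ → Bool, branch f ∈ NDclass ∧ ∀ X ∈ F, (branch f ∩ X).Finite := by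
    intro F hF _ hlt
    exact main_part2 F hF hlt
  refine ⟨?_, part2⟩
  obtain ⟨F0, hF0inf, hF0mad⟩ := exists_mad
  refine le_csInf ⟨#F0, F0, hF0inf, hF0mad, rfl⟩ ?_
  rintro c ⟨F, hFinf, hFmad, rfl⟩
  by_contra hlt
  push_neg at hlt
  obtain ⟨f, hfND, hfad⟩ := part2 F hFmad.1 hFmad.2.1 hlt
  obtain ⟨X, hXF, hXinf⟩ := hFmad.2.2 (branch f) hfND
  exact hXinf (hfad X hXF)
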